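/- (Claim in the proof of Lemma 2.2, limit as a → +∞) Let α ∈ (0,2), p = 2⌊2/α⌋ + 1, R > 0, and let e, η ∈ ℝ^N be orthogonal unit vectors. For a > 0 define q_a(t) = R e cos^p(2πt) + a η sin^p(2πt), so that |q_a(t)|² = R² cos^{2p}(2πt) + a² sin^{2p}(2πt). Then ∫₀¹ |q_a(t)|^{-α} dt → 0 as a → +∞. -/

import Mathlib

open scoped InnerProductSpace

open Filter MeasureTheory

/-- Claim in the proof of Lemma 2.2 (limit as `a → +∞`):
for `q_a(t) = R cos^p(2πt) e + a sin^p(2πt) η`, `∫₀¹ ‖q_a(t)‖^(-α) dt → 0`. -/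
theorem stmt_5 {N : ℕ} (hN : 2 ≤ N) (α : ℝ) (hα : α ∈ Set.Ioo (0 : ℝ) 2)
    (p : ℕ) (hp : p = 2 * ⌊2 / α⌋₊ + 1)
    (R : ℝ) (hR : 0 < R) (e η : EuclideanSpace ℝ (Fin N))
    (he : ‖e‖ = 1) (hη : ‖η‖ = 1) (heη : ⟪e, η⟫_ℝ = 0)
    (q : ℝ → ℝ → EuclideanSpace ℝ (Fin N))
    (hq : ∀ a t, q a t = (R * Real.cos (2 * Real.pi * t) ^ p) • e
        + (a * Real.sin (2 * Real.pi * t) ^ p) • η) :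
    Filter.Tendsto (fun a : ℝ => ∫ t in (0:ℝ)..1, ‖q a t‖ ^ (-α))
      Filter.atTop (nhds 0) := by
  obtain ⟨hα0, hα2⟩ := hα
  have hπ := Real.pi_pos
  -- norm formula
  have hnorm : ∀ a t, ‖q a t‖ = Real.sqrt ((R * Real.cos (2 * Real.pi * t) ^ p) ^ 2
      + (a * Real.sin (2 * Real.pi * t) ^ p) ^ 2) := by
    intro a t
    have h2 : ‖q a t‖ ^ 2 = (R * Real.cos (2 * Real.pi * t) ^ p) ^ 2
        + (a * Real.sin (2 * Real.pi * t) ^ p) ^ 2 := by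
      rw [hq, norm_add_sq_real, real_inner_smul_left, real_inner_smul_right, heη,
        norm_smul, norm_smul, he, hη]
      simp only [Real.norm_eq_abs, mul_one, mul_zero, add_zero, mul_pow, ← abs_pow, sq_abs]
      rw [abs_of_nonneg (by positivity), abs_of_nonneg (by positivity)]
    rw [← h2, Real.sqrt_sq (norm_nonneg _)]
  set C : ℝ := Real.sqrt (min (R ^ 2) 1 * (1 / 2 : ℝ) ^ p) with hCdef
  have hC : 0 < C := by
    apply Real.sqrt_pos.mpr
    have : 0 < min (R ^ 2) 1 := lt_min (by positivity) one_pos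
    positivity
  -- uniform lower bound for a ≥ 1
  have hlow : ∀ a t : ℝ, 1 ≤ a → C ≤ ‖q a t‖ := by
    intro a t ha
    rw [hnorm]
    apply Real.sqrt_le_sqrt
    have hsc : Real.sin (2 * Real.pi * t) ^ 2 + Real.cos (2 * Real.pi * t) ^ 2 = 1 :=
      Real.sin_sq_add_cos_sq _
    set u := Real.cos (2 * Real.pi * t) ^ 2 with hu
    set v := Real.sin (2 * Real.pi * t) ^ 2 with hv
    have h1 : (R * Real.cos (2 * Real.pi * t) ^ p) ^ 2 = R ^ 2 * u ^ p := by
      rw [mul_pow, hu, ← pow_mul, ← pow_mul, mul_comm p 2]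
    have h2 : (a * Real.sin (2 * Real.pi * t) ^ p) ^ 2 = a ^ 2 * v ^ p := by
      rw [mul_pow, hv, ← pow_mul, ← pow_mul, mul_comm p 2]
    rw [h1, h2]
    have ha2 : (1 : ℝ) ≤ a ^ 2 := by nlinarith
    rcases le_or_gt (1 / 2 : ℝ) u with h | h
    · calc min (R ^ 2) 1 * (1 / 2 : ℝ) ^ p
          ≤ R ^ 2 * u ^ p := by
            apply mul_le_mul (min_le_left _ _) (pow_le_pow_left₀ (by norm_num) h p)
              (by positivity) (sq_nonneg R)
        _ ≤ R ^ 2 * u ^ p + a ^ 2 * v ^ p := by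
            have : 0 ≤ a ^ 2 * v ^ p := by positivity
            linarith
    · have hv2 : (1 / 2 : ℝ) ≤ v := by linarith
      calc min (R ^ 2) 1 * (1 / 2 : ℝ) ^ p
          ≤ 1 * v ^ p := by
            apply mul_le_mul (min_le_right _ _) (pow_le_pow_left₀ (by norm_num) hv2 p)
              (by positivity) zero_le_one
        _ ≤ a ^ 2 * v ^ p := by
            apply mul_le_mul_of_nonneg_right ha2 (by positivity)
        _ ≤ R ^ 2 * u ^ p + a ^ 2 * v ^ p := by
            have : 0 ≤ R ^ 2 * u ^ p := by positivity
            linarith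
  simp only [intervalIntegral.integral_of_le (zero_le_one)]
  have key : Filter.Tendsto (fun a : ℝ => ∫ t in Set.Ioc (0:ℝ) 1, ‖q a t‖ ^ (-α))
      Filter.atTop (nhds (∫ t in Set.Ioc (0:ℝ) 1, (0:ℝ))) := by
    apply MeasureTheory.tendsto_integral_filter_of_dominated_convergence
      (fun _ => C ^ (-α))
    · -- a.e. strong measurability, eventually
      filter_upwards [eventually_ge_atTop (1:ℝ)] with a ha
      apply Continuous.aestronglyMeasurable
      apply continuous_iff_continuousAt.mpr
      intro t
      have hcont : Continuous fun t => ‖q a t‖ := by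
        have : (fun t => ‖q a t‖) = fun t => Real.sqrt
            ((R * Real.cos (2 * Real.pi * t) ^ p) ^ 2
              + (a * Real.sin (2 * Real.pi * t) ^ p) ^ 2) := funext fun t => hnorm a t
        rw [this]
        fun_prop
      exact hcont.continuousAt.rpow_const
        (Or.inl (ne_of_gt (lt_of_lt_of_le hC (hlow a t ha))))
    · -- domination
      filter_upwards [eventually_ge_atTop (1:ℝ)] with a ha
      apply Filter.Eventually.of_forall
      intro t
      rw [Real.norm_eq_abs, abs_of_nonneg (Real.rpow_nonneg (norm_nonneg _) _)]
      exact Real.rpow_le_rpow_of_nonpos hC (hlow a t ha) (neg_nonpos.mpr hα0.le)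
    · -- integrability of the bound
      exact (MeasureTheory.integrableOn_const_iff (C := C ^ (-α))).mpr (Or.inr (by simp))
    · -- a.e. pointwise limit
      have hS : {t : ℝ | Real.sin (2 * Real.pi * t) = 0}.Countable := by
        have hsub : {t : ℝ | Real.sin (2 * Real.pi * t) = 0} ⊆
            Set.range (fun n : ℤ => (n : ℝ) / 2) := by
          intro t ht
          rw [Set.mem_setOf_eq, Real.sin_eq_zero_iff] at ht
          obtain ⟨n, hn⟩ := ht
          refine ⟨n, ?_⟩
          have hπ' : Real.pi ≠ 0 := ne_of_gt hπ
          field_simp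
          nlinarith [hn]
        exact (Set.countable_range _).mono hsub
      have hae : ∀ᵐ t ∂(volume.restrict (Set.Ioc (0:ℝ) 1)),
          Real.sin (2 * Real.pi * t) ≠ 0 := by
        apply MeasureTheory.ae_restrict_of_ae
        rw [MeasureTheory.ae_iff]
        simpa using hS.measure_zero volume
      filter_upwards [hae] with t ht
      have h1 : Filter.Tendsto (fun a : ℝ => ‖q a t‖) Filter.atTop Filter.atTop := by
        have hmono : ∀ a : ℝ, 0 ≤ a →
            a * |Real.sin (2 * Real.pi * t)| ^ p ≤ ‖q a t‖ := by
          intro a ha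
          rw [hnorm]
          calc a * |Real.sin (2 * Real.pi * t)| ^ p
              = |a * Real.sin (2 * Real.pi * t) ^ p| := by
                rw [abs_mul, abs_pow, abs_of_nonneg ha]
            _ = Real.sqrt ((a * Real.sin (2 * Real.pi * t) ^ p) ^ 2) :=
                (Real.sqrt_sq_eq_abs _).symm
            _ ≤ _ := Real.sqrt_le_sqrt (le_add_of_nonneg_left (sq_nonneg _))
        apply tendsto_atTop_mono' _ ((eventually_ge_atTop (0:ℝ)).mono fun a ha => hmono a ha)
        exact Filter.Tendsto.atTop_mul_const (pow_pos (abs_pos.mpr ht) p) tendsto_id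
      exact (tendsto_rpow_neg_atTop hα0).comp h1
  simpa using key
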